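/- In the dengue model with control c(t) ∈ [0,1], if initially 0 ≤ s_h(0), e_h(0), i_h(0), r_h(0) and s_h(0)+e_h(0)+i_h(0)+r_h(0) = 1, and 0 ≤ a_m(0), s_m(0), e_m(0), i_m(0) ≤ 1, then the set Ω = {(s_h,e_h,i_h,r_h,a_m,s_m,e_m,i_m) : all components ≥ 0, human components sum to 1} is positively invariant: any solution of the system starting in Ω remains in Ω for all t ≥ 0. -/

import Mathlib

open Set Filter Real

lemma min_mul_self' (x : ℝ) : min x 0 * x = (min x 0)^2 := by
  rcases le_total x 0 with h|h
  · rw [min_eq_left h]; ring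
  · rw [min_eq_right h]; ring

lemma lin_bound {x : ℝ} (hx : x ≤ 0) (y : ℝ) : x * y ≤ (x^2 + (min y 0)^2)/2 := by
  have h1 : x * y ≤ x * min y 0 := mul_le_mul_of_nonpos_left (min_le_left _ _) hx
  nlinarith [sq_nonneg (x - min y 0)]

lemma negpart_mul (u v : ℝ) :
    -(min (u*v) 0) ≤ |u| * (-(min v 0)) + |v| * (-(min u 0)) := by
  rcases le_total u 0 with hu|hu <;> rcases le_total v 0 with hv|hv
  · have h : 0 ≤ u * v := by nlinarith
    rw [min_eq_right h, min_eq_left hu, min_eq_left hv, abs_of_nonpos hu, abs_of_nonpos hv]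
    nlinarith
  · have h : u * v ≤ 0 := mul_nonpos_of_nonpos_of_nonneg hu hv
    rw [min_eq_left h, min_eq_left hu, min_eq_right hv, abs_of_nonpos hu, abs_of_nonneg hv]
    nlinarith
  · have h : u * v ≤ 0 := mul_nonpos_of_nonneg_of_nonpos hu hv
    rw [min_eq_left h, min_eq_right hu, min_eq_left hv, abs_of_nonneg hu, abs_of_nonpos hv]
    nlinarith
  · have h : 0 ≤ u * v := mul_nonneg hu hv
    rw [min_eq_right h, min_eq_right hu, min_eq_right hv, abs_of_nonneg hu, abs_of_nonneg hv]
    nlinarith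

lemma prod_bound {M x : ℝ} (hx : x ≤ 0) (hM : 0 ≤ M) {u v : ℝ}
    (hu : |u| ≤ M) (hv : |v| ≤ M) :
    x * (u * v) ≤ M * (2*x^2 + (min u 0)^2 + (min v 0)^2) / 2 := by
  have h1 : x * (u*v) ≤ x * min (u*v) 0 := mul_le_mul_of_nonpos_left (min_le_left _ _) hx
  have h2 : -(min (u*v) 0) ≤ |u| * (-(min v 0)) + |v| * (-(min u 0)) := negpart_mul u v
  have h3 : (0:ℝ) ≤ -x := neg_nonneg.2 hx
  have hv0 : (0:ℝ) ≤ -(min v 0) := neg_nonneg.2 (min_le_right v 0)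
  have hu0 : (0:ℝ) ≤ -(min u 0) := neg_nonneg.2 (min_le_right u 0)
  have h5 : (-x) * (-(min (u*v) 0)) ≤ (-x) * (|u| * (-(min v 0)) + |v| * (-(min u 0))) :=
    mul_le_mul_of_nonneg_left h2 h3
  have h6 : |u| * (-(min v 0)) ≤ M * (-(min v 0)) := mul_le_mul_of_nonneg_right hu hv0
  have h7 : |v| * (-(min u 0)) ≤ M * (-(min u 0)) := mul_le_mul_of_nonneg_right hv hu0
  have h9 : (-x) * (|u| * (-(min v 0)) + |v| * (-(min u 0)))
      ≤ (-x) * (M * (-(min v 0)) + M * (-(min u 0))) :=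
    mul_le_mul_of_nonneg_left (by linarith) h3
  have h8 : (-x) * (M * (-(min v 0)) + M * (-(min u 0)))
      ≤ M * (2*x^2 + (min u 0)^2 + (min v 0)^2) / 2 := by
    nlinarith [mul_nonneg hM (sq_nonneg (x - min u 0)), mul_nonneg hM (sq_nonneg (x - min v 0))]
  nlinarith [h1, h5, h9, h8]

lemma am_bound {M A : ℝ} (hA : A ≤ 0) (hAM : |A| ≤ M) (a b c : ℝ) :
    A * ((1 - A) * (a+b+c))
      ≤ (1+M) * (3*A^2 + (min a 0)^2 + (min b 0)^2 + (min c 0)^2) / 2 := by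
  have hAM' : -A ≤ M := by rwa [abs_of_nonpos hA] at hAM
  have hM0 : (0:ℝ) ≤ M := le_trans (neg_nonneg.2 hA) hAM'
  have h1M : (0:ℝ) ≤ 1 + M := by linarith
  have hw : A * (1 - A) ≤ 0 := mul_nonpos_of_nonpos_of_nonneg hA (by linarith)
  have key : ∀ p : ℝ, p ≤ 0 → A*(1-A)*p ≤ (1+M)*(A^2 + p^2)/2 := by
    intro p hp
    have e1 : 0 ≤ A * p * (M + A) :=
      mul_nonneg (by nlinarith) (by linarith)
    nlinarith [mul_nonneg h1M (sq_nonneg (A - p))]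
  have h2 : min a 0 + min b 0 + min c 0 ≤ min (a+b+c) 0 := by
    refine le_min ?_ ?_
    · have := min_le_left a 0; have := min_le_left b 0; have := min_le_left c 0; linarith
    · have := min_le_right a 0; have := min_le_right b 0; have := min_le_right c 0; linarith
  calc A * ((1 - A) * (a+b+c)) = (A*(1-A)) * (a+b+c) := by ring
    _ ≤ (A*(1-A)) * min (a+b+c) 0 := mul_le_mul_of_nonpos_left (min_le_left _ _) hw
    _ ≤ (A*(1-A)) * (min a 0 + min b 0 + min c 0) := mul_le_mul_of_nonpos_left h2 hw
    _ = A*(1-A)*(min a 0) + A*(1-A)*(min b 0) + A*(1-A)*(min c 0) := by ring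
    _ ≤ (1+M)*(A^2 + (min a 0)^2)/2 + (1+M)*(A^2 + (min b 0)^2)/2
        + (1+M)*(A^2 + (min c 0)^2)/2 := by
        have k1 := key (min a 0) (min_le_right a 0)
        have k2 := key (min b 0) (min_le_right b 0)
        have k3 := key (min c 0) (min_le_right c 0)
        linarith
    _ = (1+M) * (3*A^2 + (min a 0)^2 + (min b 0)^2 + (min c 0)^2) / 2 := by ring

lemma hasDerivAt_mul_abs (x : ℝ) : HasDerivAt (fun y : ℝ => y * |y|) (2*|x|) x := by
  rcases lt_trichotomy x 0 with h|h|h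
  · have hd : HasDerivAt (fun y : ℝ => -(y*y)) (-(1*x + x*1)) x :=
      ((hasDerivAt_id x).mul (hasDerivAt_id x)).neg
    have hev : (fun y : ℝ => y * |y|) =ᶠ[nhds x] fun y => -(y*y) := by
      filter_upwards [Iio_mem_nhds h] with y hy
      rw [abs_of_neg hy]; ring
    have := hd.congr_of_eventuallyEq hev
    refine this.congr_deriv ?_
    rw [abs_of_neg h]; ring
  · subst h
    rw [hasDerivAt_iff_tendsto_slope]
    have hsl : ∀ z : ℝ, z ≠ 0 → slope (fun y : ℝ => y*|y|) 0 z = |z| := by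
      intro z hz
      rw [slope_def_field]
      field_simp
      rw [abs_zero]; ring
    have htend : Tendsto (fun z : ℝ => |z|) (nhdsWithin 0 {(0:ℝ)}ᶜ) (nhds 0) := by
      have : Tendsto (fun z : ℝ => |z|) (nhds 0) (nhds |0|) := continuous_abs.tendsto 0
      simpa using this.mono_left nhdsWithin_le_nhds
    have : (2:ℝ) * |(0:ℝ)| = 0 := by simp
    rw [this]
    refine htend.congr' ?_
    filter_upwards [self_mem_nhdsWithin] with z hz
    exact (hsl z hz).symm
  · have hd : HasDerivAt (fun y : ℝ => y*y) (1*x + x*1) x :=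
      (hasDerivAt_id x).mul (hasDerivAt_id x)
    have hev : (fun y : ℝ => y * |y|) =ᶠ[nhds x] fun y => y*y := by
      filter_upwards [Ioi_mem_nhds h] with y hy
      rw [abs_of_pos hy]
    have := hd.congr_of_eventuallyEq hev
    refine this.congr_deriv ?_
    rw [abs_of_pos h]; ring

lemma hasDerivAt_negpart_sq (x : ℝ) :
    HasDerivAt (fun y : ℝ => (min y 0)^2) (2 * min x 0) x := by
  have hfun : (fun y : ℝ => (min y 0)^2) = fun y => (y*y - y*|y|)/2 := by
    funext y
    rcases le_total y 0 with h|h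
    · rw [min_eq_left h, abs_of_nonpos h]; ring
    · rw [min_eq_right h, abs_of_nonneg h]; ring
  rw [hfun]
  have := (((hasDerivAt_id x).mul (hasDerivAt_id x)).sub (hasDerivAt_mul_abs x)).div_const 2
  refine this.congr_deriv ?_
  rcases le_total x 0 with h|h
  · rw [min_eq_left h, abs_of_nonpos h]; simp only [id_eq]; ring
  · rw [min_eq_right h, abs_of_nonneg h]; simp only [id_eq]; ring

lemma T1b {P μh M S Im : ℝ} (hP : 0 < P) (hμh : 0 < μh) (hM : 0 ≤ M) (hbIm : |Im| ≤ M) :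
    2*min S 0*(μh - (P*Im + μh)*S) ≤ 2*(P*M)*(min S 0)^2 := by
  rcases le_total S 0 with h|h
  · rw [min_eq_left h]
    have hIm' : -M ≤ Im := (abs_le.1 hbIm).1
    nlinarith [mul_nonneg (mul_nonneg (by linarith : (0:ℝ) ≤ 2*P) (sq_nonneg S)) (by linarith : (0:ℝ) ≤ M + Im),
      mul_nonneg hμh.le (neg_nonneg.2 h), mul_nonneg hμh.le (sq_nonneg S)]
  · rw [min_eq_right h]
    nlinarith [mul_nonneg hP.le hM]

lemma T2b {P ν M E Im S : ℝ} (hP : 0 < P) (hν : 0 < ν) (hM : 0 ≤ M)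
    (hbIm : |Im| ≤ M) (hbS : |S| ≤ M) :
    2*min E 0*(P*Im*S - ν*E) ≤ P*M*(2*(min E 0)^2 + (min Im 0)^2 + (min S 0)^2) := by
  rcases le_total E 0 with h|h
  · rw [min_eq_left h]
    have hpb := prod_bound h hM hbIm hbS
    nlinarith [mul_le_mul_of_nonneg_left hpb (by linarith : (0:ℝ) ≤ 2*P),
      mul_nonneg hν.le (sq_nonneg E)]
  · rw [min_eq_right h]
    nlinarith [mul_nonneg (mul_nonneg hP.le hM) (sq_nonneg (min Im 0)),
      mul_nonneg (mul_nonneg hP.le hM) (sq_nonneg (min S 0))]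

lemma T3b {a b x y : ℝ} (ha : 0 < a) (hb : 0 < b) :
    2*min x 0*(a*y - b*x) ≤ a*((min x 0)^2 + (min y 0)^2) := by
  rcases le_total x 0 with h|h
  · rw [min_eq_left h]
    nlinarith [mul_le_mul_of_nonneg_left (lin_bound h y) (by linarith : (0:ℝ) ≤ 2*a),
      mul_nonneg hb.le (sq_nonneg x)]
  · rw [min_eq_right h]
    nlinarith [mul_nonneg ha.le (sq_nonneg (min y 0))]

lemma T8b {a b ct x y : ℝ} (ha : 0 < a) (hb : 0 < b) (hct : 0 ≤ ct) :
    2*min x 0*(a*y - b*x - ct*x) ≤ a*((min x 0)^2 + (min y 0)^2) := by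
  rcases le_total x 0 with h|h
  · rw [min_eq_left h]
    nlinarith [mul_le_mul_of_nonneg_left (lin_bound h y) (by linarith : (0:ℝ) ≤ 2*a),
      mul_nonneg hb.le (sq_nonneg x), mul_nonneg hct (sq_nonneg x)]
  · rw [min_eq_right h]
    nlinarith [mul_nonneg ha.le (sq_nonneg (min y 0))]

lemma T5b {s d M A a b c : ℝ} (hs : 0 < s) (hd : 0 < d) (hM : 0 ≤ M) (hbA : |A| ≤ M) :
    2*min A 0*(s*(1 - A)*(a+b+c) - d*A)
      ≤ (s*(1+M))*(3*(min A 0)^2 + (min a 0)^2 + (min b 0)^2 + (min c 0)^2) := by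
  have h1M : (0:ℝ) ≤ 1 + M := by linarith
  rcases le_total A 0 with h|h
  · rw [min_eq_left h]
    have hab := am_bound h hbA a b c
    nlinarith [mul_le_mul_of_nonneg_left hab (by linarith : (0:ℝ) ≤ 2*s),
      mul_nonneg hd.le (sq_nonneg A)]
  · rw [min_eq_right h]
    nlinarith [mul_nonneg (mul_nonneg hs.le h1M) (sq_nonneg (min a 0)),
      mul_nonneg (mul_nonneg hs.le h1M) (sq_nonneg (min b 0)),
      mul_nonneg (mul_nonneg hs.le h1M) (sq_nonneg (min c 0))]

lemma T6b {r Q μm ct M Sm A I : ℝ} (hr : 0 < r) (hQ : 0 < Q) (hμm : 0 < μm)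
    (hct : 0 ≤ ct) (hM : 0 ≤ M) (hbI : |I| ≤ M) :
    2*min Sm 0*(r*A - (Q*I + μm)*Sm - ct*Sm)
      ≤ r*((min Sm 0)^2 + (min A 0)^2) + 2*(Q*M)*(min Sm 0)^2 := by
  rcases le_total Sm 0 with h|h
  · rw [min_eq_left h]
    have hI' : -M ≤ I := (abs_le.1 hbI).1
    nlinarith [mul_le_mul_of_nonneg_left (lin_bound h A) (by linarith : (0:ℝ) ≤ 2*r),
      mul_nonneg (mul_nonneg (by linarith : (0:ℝ) ≤ 2*Q) (sq_nonneg Sm)) (by linarith : (0:ℝ) ≤ M + I),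
      mul_nonneg hμm.le (sq_nonneg Sm), mul_nonneg hct (sq_nonneg Sm)]
  · rw [min_eq_right h]
    nlinarith [mul_nonneg hr.le (sq_nonneg (min A 0))]

lemma T7b {Q w ct M Em I Sm : ℝ} (hQ : 0 < Q) (hw : 0 < w) (hct : 0 ≤ ct) (hM : 0 ≤ M)
    (hbI : |I| ≤ M) (hbSm : |Sm| ≤ M) :
    2*min Em 0*(Q*I*Sm - w*Em - ct*Em)
      ≤ Q*M*(2*(min Em 0)^2 + (min I 0)^2 + (min Sm 0)^2) := by
  rcases le_total Em 0 with h|h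
  · rw [min_eq_left h]
    have hpb := prod_bound h hM hbI hbSm
    nlinarith [mul_le_mul_of_nonneg_left hpb (by linarith : (0:ℝ) ≤ 2*Q),
      mul_nonneg hw.le (sq_nonneg Em), mul_nonneg hct (sq_nonneg Em)]
  · rw [min_eq_right h]
    nlinarith [mul_nonneg (mul_nonneg hQ.le hM) (sq_nonneg (min I 0)),
      mul_nonneg (mul_nonneg hQ.le hM) (sq_nonneg (min Sm 0))]

set_option maxHeartbeats 1000000 in
lemma key_ineq (B βmh βhm m k μh νh ηh φ ηA μA μm ηm M ct : ℝ)
    (hB : 0 < B) (hβmh : 0 < βmh) (hβhm : 0 < βhm) (hm : 0 < m) (hk : 0 < k)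
    (hμh : 0 < μh) (hνh : 0 < νh) (hηh : 0 < ηh) (hφ : 0 < φ)
    (hηA : 0 < ηA) (hμA : 0 < μA) (hμm : 0 < μm) (hηm : 0 < ηm)
    (hM : 0 ≤ M) (hct : 0 ≤ ct)
    (S E I R A Sm Em Im : ℝ)
    (hbS : |S| ≤ M) (hbE : |E| ≤ M) (hbI : |I| ≤ M) (hbR : |R| ≤ M)
    (hbA : |A| ≤ M) (hbSm : |Sm| ≤ M) (hbEm : |Em| ≤ M) (hbIm : |Im| ≤ M) :
    2*min S 0*(μh - (B*βmh*m*Im + μh)*S) + 2*min E 0*(B*βmh*m*Im*S - (νh+μh)*E) + 2*min I 0*(νh*E - (ηh+μh)*I) + 2*min R 0*(ηh*I - μh*R) + 2*min A 0*(φ*(m/k)*(1 - A)*(Sm+Em+Im) - (ηA+μA)*A) + 2*min Sm 0*(ηA*(k/m)*A - (B*βhm*I + μm)*Sm - ct*Sm) + 2*min Em 0*(B*βhm*I*Sm - (μm+ηm)*Em - ct*Em) + 2*min Im 0*(ηm*Em - μm*Im - ct*Im) + (((μh - (B*βmh*m*Im + μh)*S) + (B*βmh*m*Im*S - (νh+μh)*E)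 + (νh*E - (ηh+μh)*I) + (ηh*I - μh*R)) * (S+E+I+R-1) + (S+E+I+R-1) * ((μh - (B*βmh*m*Im + μh)*S) + (B*βmh*m*Im*S - (νh+μh)*E) + (νh*E - (ηh+μh)*I) + (ηh*I - μh*R)))
    ≤ (4*(B*βmh*m*M) + 2*νh + 2*ηh + 3*((φ*(m/k))*(1+M)) + 2*(ηA*(k/m)) + 4*(B*βhm*M) + 2*ηm) * ((min S 0)^2 + (min E 0)^2 + (min I 0)^2 + (min R 0)^2 + (min A 0)^2 + (min Sm 0)^2 + (min Em 0)^2 + (min Im 0)^2 + (S+E+I+R-1)*(S+E+I+R-1)) := by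
  have hq1 : (0:ℝ) ≤ (min S 0)^2 := sq_nonneg _
  have hq2 : (0:ℝ) ≤ (min E 0)^2 := sq_nonneg _
  have hq3 : (0:ℝ) ≤ (min I 0)^2 := sq_nonneg _
  have hq4 : (0:ℝ) ≤ (min R 0)^2 := sq_nonneg _
  have hq5 : (0:ℝ) ≤ (min A 0)^2 := sq_nonneg _
  have hq6 : (0:ℝ) ≤ (min Sm 0)^2 := sq_nonneg _
  have hq7 : (0:ℝ) ≤ (min Em 0)^2 := sq_nonneg _
  have hq8 : (0:ℝ) ≤ (min Im 0)^2 := sq_nonneg _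
  have hq9 : (0:ℝ) ≤ (S+E+I+R-1)*(S+E+I+R-1) := mul_self_nonneg _
  have h1M : (0:ℝ) ≤ 1 + M := by linarith
  have m1 : (0:ℝ) ≤ B*βmh*m*M := by positivity
  have m4 : (0:ℝ) ≤ (φ*(m/k))*(1+M) := mul_nonneg (by positivity) h1M
  have m5 : (0:ℝ) ≤ ηA*(k/m) := by positivity
  have m6 : (0:ℝ) ≤ B*βhm*M := by positivity
  have hT1 : 2*min S 0*(μh - (B*βmh*m*Im + μh)*S) ≤ 2*(B*βmh*m*M)*(min S 0)^2 :=
    T1b (S := S) (by positivity) hμh hM hbIm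
  have hT2 : 2*min E 0*(B*βmh*m*Im*S - (νh+μh)*E) ≤ (B*βmh*m)*M*(2*(min E 0)^2 + (min Im 0)^2 + (min S 0)^2) :=
    T2b (P := B*βmh*m) (by positivity) (by positivity) hM hbIm hbS
  have hT3 : 2*min I 0*(νh*E - (ηh+μh)*I) ≤ νh*((min I 0)^2 + (min E 0)^2) :=
    T3b hνh (by positivity)
  have hT4 : 2*min R 0*(ηh*I - μh*R) ≤ ηh*((min R 0)^2 + (min I 0)^2) :=
    T3b hηh hμh
  have hT5 : 2*min A 0*(φ*(m/k)*(1 - A)*(Sm+Em+Im) - (ηA+μA)*A) ≤ ((φ*(m/k))*(1+M))*(3*(min A 0)^2 + (min Sm 0)^2 + (min Em 0)^2 + (min Im 0)^2) :=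
    T5b (by positivity) (by positivity) hM hbA
  have hT6 : 2*min Sm 0*(ηA*(k/m)*A - (B*βhm*I + μm)*Sm - ct*Sm) ≤ (ηA*(k/m))*((min Sm 0)^2 + (min A 0)^2) + 2*((B*βhm)*M)*(min Sm 0)^2 :=
    T6b (by positivity) (by positivity) hμm hct hM hbI
  have hT7 : 2*min Em 0*(B*βhm*I*Sm - (μm+ηm)*Em - ct*Em) ≤ (B*βhm)*M*(2*(min Em 0)^2 + (min I 0)^2 + (min Sm 0)^2) :=
    T7b (by positivity) (by positivity) hct hM hbI hbSm
  have hT8 : 2*min Im 0*(ηm*Em - μm*Im - ct*Im) ≤ ηm*((min Im 0)^2 + (min Em 0)^2) :=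
    T8b hηm hμm hct
  have hT9 : (((μh - (B*βmh*m*Im + μh)*S) + (B*βmh*m*Im*S - (νh+μh)*E) + (νh*E - (ηh+μh)*I) + (ηh*I - μh*R)) * (S+E+I+R-1) + (S+E+I+R-1) * ((μh - (B*βmh*m*Im + μh)*S) + (B*βmh*m*Im*S - (νh+μh)*E) + (νh*E - (ηh+μh)*I) + (ηh*I - μh*R))) ≤ 0 := by
    nlinarith [mul_nonneg hμh.le (mul_self_nonneg (S+E+I+R-1))]
  have hsS : (3*(B*βmh*m*M)) * (min S 0)^2 ≤ (4*(B*βmh*m*M) + 2*νh + 2*ηh + 3*((φ*(m/k))*(1+M)) + 2*(ηA*(k/m)) + 4*(B*βhm*M) + 2*ηm) * (min S 0)^2 := by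
    apply mul_le_mul_of_nonneg_right _ hq1
    linarith
  have hsE : (2*(B*βmh*m*M) + νh) * (min E 0)^2 ≤ (4*(B*βmh*m*M) + 2*νh + 2*ηh + 3*((φ*(m/k))*(1+M)) + 2*(ηA*(k/m)) + 4*(B*βhm*M) + 2*ηm) * (min E 0)^2 := by
    apply mul_le_mul_of_nonneg_right _ hq2
    linarith
  have hsI : (νh + ηh + B*βhm*M) * (min I 0)^2 ≤ (4*(B*βmh*m*M) + 2*νh + 2*ηh + 3*((φ*(m/k))*(1+M)) + 2*(ηA*(k/m)) + 4*(B*βhm*M) + 2*ηm) * (min I 0)^2 := by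
    apply mul_le_mul_of_nonneg_right _ hq3
    linarith
  have hsR : (ηh) * (min R 0)^2 ≤ (4*(B*βmh*m*M) + 2*νh + 2*ηh + 3*((φ*(m/k))*(1+M)) + 2*(ηA*(k/m)) + 4*(B*βhm*M) + 2*ηm) * (min R 0)^2 := by
    apply mul_le_mul_of_nonneg_right _ hq4
    linarith
  have hsA : (3*((φ*(m/k))*(1+M)) + ηA*(k/m)) * (min A 0)^2 ≤ (4*(B*βmh*m*M) + 2*νh + 2*ηh + 3*((φ*(m/k))*(1+M)) + 2*(ηA*(k/m)) + 4*(B*βhm*M) + 2*ηm) * (min A 0)^2 := by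
    apply mul_le_mul_of_nonneg_right _ hq5
    linarith
  have hsSm : (((φ*(m/k))*(1+M)) + ηA*(k/m) + 3*(B*βhm*M)) * (min Sm 0)^2 ≤ (4*(B*βmh*m*M) + 2*νh + 2*ηh + 3*((φ*(m/k))*(1+M)) + 2*(ηA*(k/m)) + 4*(B*βhm*M) + 2*ηm) * (min Sm 0)^2 := by
    apply mul_le_mul_of_nonneg_right _ hq6
    linarith
  have hsEm : (((φ*(m/k))*(1+M)) + 2*(B*βhm*M) + ηm) * (min Em 0)^2 ≤ (4*(B*βmh*m*M) + 2*νh + 2*ηh + 3*((φ*(m/k))*(1+M)) + 2*(ηA*(k/m)) + 4*(B*βhm*M) + 2*ηm) * (min Em 0)^2 := by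
    apply mul_le_mul_of_nonneg_right _ hq7
    linarith
  have hsIm : ((B*βmh*m*M) + ((φ*(m/k))*(1+M)) + ηm) * (min Im 0)^2 ≤ (4*(B*βmh*m*M) + 2*νh + 2*ηh + 3*((φ*(m/k))*(1+M)) + 2*(ηA*(k/m)) + 4*(B*βhm*M) + 2*ηm) * (min Im 0)^2 := by
    apply mul_le_mul_of_nonneg_right _ hq8
    linarith
  have hsH : (0:ℝ) ≤ (4*(B*βmh*m*M) + 2*νh + 2*ηh + 3*((φ*(m/k))*(1+M)) + 2*(ηA*(k/m)) + 4*(B*βhm*M) + 2*ηm) * ((S+E+I+R-1)*(S+E+I+R-1)) := by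
    apply mul_nonneg _ hq9
    linarith
  linarith [hT1, hT2, hT3, hT4, hT5, hT6, hT7, hT8, hT9, hsS, hsE, hsI, hsR, hsA, hsSm, hsEm, hsIm, hsH]

set_option maxHeartbeats 1000000 in
/-- Positive invariance of Ω = {components ≥ 0, human components sum to 1}
for the controlled dengue model. -/
theorem dengue_positively_invariant
    (B βmh βhm m k μh νh ηh φ ηA μA μm ηm : ℝ)
    (hB : 0 < B) (hβmh : 0 < βmh) (hβhm : 0 < βhm) (hm : 0 < m) (hk : 0 < k)
    (hμh : 0 < μh) (hνh : 0 < νh) (hηh : 0 < ηh) (hφ : 0 < φ)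
    (hηA : 0 < ηA) (hμA : 0 < μA) (hμm : 0 < μm) (hηm : 0 < ηm)
    (c : ℝ → ℝ) (hc_cont : Continuous c) (hc : ∀ t, 0 ≤ t → c t ∈ Set.Icc (0:ℝ) 1)
    (sh eh ih rh am sm em im : ℝ → ℝ)
    (hsh : ∀ t, 0 ≤ t → HasDerivAt sh (μh - (B * βmh * m * im t + μh) * sh t) t)
    (heh : ∀ t, 0 ≤ t → HasDerivAt eh (B * βmh * m * im t * sh t - (νh + μh) * eh t) t)
    (hih : ∀ t, 0 ≤ t → HasDerivAt ih (νh * eh t - (ηh + μh) * ih t) t)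
    (hrh : ∀ t, 0 ≤ t → HasDerivAt rh (ηh * ih t - μh * rh t) t)
    (ham : ∀ t, 0 ≤ t → HasDerivAt am
      (φ * (m / k) * (1 - am t) * (sm t + em t + im t) - (ηA + μA) * am t) t)
    (hsm : ∀ t, 0 ≤ t → HasDerivAt sm
      (ηA * (k / m) * am t - (B * βhm * ih t + μm) * sm t - c t * sm t) t)
    (hem : ∀ t, 0 ≤ t → HasDerivAt em
      (B * βhm * ih t * sm t - (μm + ηm) * em t - c t * em t) t)
    (him : ∀ t, 0 ≤ t → HasDerivAt im (ηm * em t - μm * im t - c t * im t) t)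
    (h0nonneg : 0 ≤ sh 0 ∧ 0 ≤ eh 0 ∧ 0 ≤ ih 0 ∧ 0 ≤ rh 0)
    (h0sum : sh 0 + eh 0 + ih 0 + rh 0 = 1)
    (h0vec : am 0 ∈ Set.Icc (0:ℝ) 1 ∧ sm 0 ∈ Set.Icc (0:ℝ) 1 ∧
             em 0 ∈ Set.Icc (0:ℝ) 1 ∧ im 0 ∈ Set.Icc (0:ℝ) 1) :
    ∀ t, 0 ≤ t →
      (0 ≤ sh t ∧ 0 ≤ eh t ∧ 0 ≤ ih t ∧ 0 ≤ rh t ∧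
       0 ≤ am t ∧ 0 ≤ sm t ∧ 0 ≤ em t ∧ 0 ≤ im t ∧
       sh t + eh t + ih t + rh t = 1) := by
  obtain ⟨hS0, hE0, hI0, hR0⟩ := h0nonneg
  obtain ⟨hA0, hSm0, hEm0, hIm0⟩ := h0vec
  intro T hT
  have hcsh : ContinuousOn sh (Icc (0:ℝ) T) := fun t htm => ((hsh t htm.1).continuousAt).continuousWithinAt
  have hceh : ContinuousOn eh (Icc (0:ℝ) T) := fun t htm => ((heh t htm.1).continuousAt).continuousWithinAt
  have hcih : ContinuousOn ih (Icc (0:ℝ) T) := fun t htm => ((hih t htm.1).continuousAt).continuousWithinAt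
  have hcrh : ContinuousOn rh (Icc (0:ℝ) T) := fun t htm => ((hrh t htm.1).continuousAt).continuousWithinAt
  have hcam : ContinuousOn am (Icc (0:ℝ) T) := fun t htm => ((ham t htm.1).continuousAt).continuousWithinAt
  have hcsm : ContinuousOn sm (Icc (0:ℝ) T) := fun t htm => ((hsm t htm.1).continuousAt).continuousWithinAt
  have hcem : ContinuousOn em (Icc (0:ℝ) T) := fun t htm => ((hem t htm.1).continuousAt).continuousWithinAt
  have hcim : ContinuousOn im (Icc (0:ℝ) T) := fun t htm => ((him t htm.1).continuousAt).continuousWithinAt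
  obtain ⟨M, hMb⟩ := (isCompact_Icc (a := (0:ℝ)) (b := T)).exists_bound_of_continuousOn
    (f := fun t => |sh t| + |eh t| + |ih t| + |rh t| + |am t| + |sm t| + |em t| + |im t|)
    (((((((hcsh.abs.add hceh.abs).add hcih.abs).add hcrh.abs).add hcam.abs).add hcsm.abs).add hcem.abs).add hcim.abs)
  have hb : ∀ t ∈ Icc (0:ℝ) T, |sh t| ≤ M ∧ |eh t| ≤ M ∧ |ih t| ≤ M ∧ |rh t| ≤ M ∧
      |am t| ≤ M ∧ |sm t| ≤ M ∧ |em t| ≤ M ∧ |im t| ≤ M := by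
    intro t htm
    have h := hMb t htm
    rw [Real.norm_eq_abs] at h
    have h' : |sh t| + |eh t| + |ih t| + |rh t| + |am t| + |sm t| + |em t| + |im t| ≤ M :=
      le_trans (le_abs_self _) h
    have a1 := abs_nonneg (sh t); have a2 := abs_nonneg (eh t); have a3 := abs_nonneg (ih t)
    have a4 := abs_nonneg (rh t); have a5 := abs_nonneg (am t); have a6 := abs_nonneg (sm t)
    have a7 := abs_nonneg (em t); have a8 := abs_nonneg (im t)
    exact ⟨by linarith, by linarith, by linarith, by linarith, by linarith, by linarith, by linarith, by linarith⟩
  have h0mem : (0:ℝ) ∈ Icc (0:ℝ) T := ⟨le_refl 0, hT⟩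
  have hM0 : (0:ℝ) ≤ M := le_trans (abs_nonneg (sh 0)) (hb 0 h0mem).1
  have hGderiv : ∀ t, 0 ≤ t → HasDerivAt (fun u => (min (sh u) 0)^2 + (min (eh u) 0)^2 + (min (ih u) 0)^2 + (min (rh u) 0)^2 + (min (am u) 0)^2 + (min (sm u) 0)^2 + (min (em u) 0)^2 + (min (im u) 0)^2 + (sh u + eh u + ih u + rh u - 1)*(sh u + eh u + ih u + rh u - 1)) (2*min (sh t) 0*(μh - (B*βmh*m*im t + μh)*sh t) + 2*min (eh t) 0*(B*βmh*m*im t*sh t - (νh+μh)*eh t) + 2*min (ih t) 0*(νh*eh t - (ηh+μh)*ih t) + 2*min (rh t) 0*(ηh*ih t - μh*rh t) + 2*min (am t) 0*(φ*(m/k)*(1 - am t)*(sm t + em t + im t) - (ηA+μA)*am t) + 2*min (sm t) 0*(ηA*(k/m)*am t - (B*βhm*ih t + μm)*sm t - c t*sm t) + 2*min (em t) 0*(B*βhm*ih t*sm t - (μm+ηm)*em t - c t*em t) + 2*min (im t) 0*(ηm*em t - μm*im t - c t*im t) + (((μh - (B*βmh*m*im t + μh)*sh t) + (B*βmh*m*im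 t*sh t - (νh+μh)*eh t) + (νh*eh t - (ηh+μh)*ih t) + (ηh*ih t - μh*rh t)) * (sh t + eh t + ih t + rh t - 1) + (sh t + eh t + ih t + rh t - 1) * ((μh - (B*βmh*m*im t + μh)*sh t) + (B*βmh*m*im t*sh t - (νh+μh)*eh t) + (νh*eh t - (ηh+μh)*ih t) + (ηh*ih t - μh*rh t)))) t := by
    intro t ht0
    have d1 : HasDerivAt (fun u => (min (sh u) 0)^2) (2 * min (sh t) 0 * (μh - (B*βmh*m*im t + μh)*sh t)) t :=
      (hasDerivAt_negpart_sq (sh t)).comp t (hsh t ht0)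
    have d2 : HasDerivAt (fun u => (min (eh u) 0)^2) (2 * min (eh t) 0 * (B*βmh*m*im t*sh t - (νh+μh)*eh t)) t :=
      (hasDerivAt_negpart_sq (eh t)).comp t (heh t ht0)
    have d3 : HasDerivAt (fun u => (min (ih u) 0)^2) (2 * min (ih t) 0 * (νh*eh t - (ηh+μh)*ih t)) t :=
      (hasDerivAt_negpart_sq (ih t)).comp t (hih t ht0)
    have d4 : HasDerivAt (fun u => (min (rh u) 0)^2) (2 * min (rh t) 0 * (ηh*ih t - μh*rh t)) t :=
      (hasDerivAt_negpart_sq (rh t)).comp t (hrh t ht0)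
    have d5 : HasDerivAt (fun u => (min (am u) 0)^2)
        (2 * min (am t) 0 * (φ*(m/k)*(1 - am t)*(sm t + em t + im t) - (ηA+μA)*am t)) t :=
      (hasDerivAt_negpart_sq (am t)).comp t (ham t ht0)
    have d6 : HasDerivAt (fun u => (min (sm u) 0)^2)
        (2 * min (sm t) 0 * (ηA*(k/m)*am t - (B*βhm*ih t + μm)*sm t - c t*sm t)) t :=
      (hasDerivAt_negpart_sq (sm t)).comp t (hsm t ht0)
    have d7 : HasDerivAt (fun u => (min (em u) 0)^2)
        (2 * min (em t) 0 * (B*βhm*ih t*sm t - (μm+ηm)*em t - c t*em t)) t :=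
      (hasDerivAt_negpart_sq (em t)).comp t (hem t ht0)
    have d8 : HasDerivAt (fun u => (min (im u) 0)^2)
        (2 * min (im t) 0 * (ηm*em t - μm*im t - c t*im t)) t :=
      (hasDerivAt_negpart_sq (im t)).comp t (him t ht0)
    have hsum : HasDerivAt (fun u => sh u + eh u + ih u + rh u - 1) ((μh - (B*βmh*m*im t + μh)*sh t) + (B*βmh*m*im t*sh t - (νh+μh)*eh t) + (νh*eh t - (ηh+μh)*ih t) + (ηh*ih t - μh*rh t)) t :=
      ((((hsh t ht0).add (heh t ht0)).add (hih t ht0)).add (hrh t ht0)).sub_const 1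
    have d9 := hsum.mul hsum
    exact ((((((((d1.add d2).add d3).add d4).add d5).add d6).add d7).add d8).add d9)
  have hcont : ContinuousOn (fun u => (min (sh u) 0)^2 + (min (eh u) 0)^2 + (min (ih u) 0)^2 + (min (rh u) 0)^2 + (min (am u) 0)^2 + (min (sm u) 0)^2 + (min (em u) 0)^2 + (min (im u) 0)^2 + (sh u + eh u + ih u + rh u - 1)*(sh u + eh u + ih u + rh u - 1)) (Icc (0:ℝ) T) := by
    have hsum : ContinuousOn (fun u => sh u + eh u + ih u + rh u - 1) (Icc (0:ℝ) T) :=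
      (((hcsh.add hceh).add hcih).add hcrh).sub continuousOn_const
    exact ((((((((((hcsh.inf continuousOn_const).pow 2).add
      ((hceh.inf continuousOn_const).pow 2)).add
      ((hcih.inf continuousOn_const).pow 2)).add
      ((hcrh.inf continuousOn_const).pow 2)).add
      ((hcam.inf continuousOn_const).pow 2)).add
      ((hcsm.inf continuousOn_const).pow 2)).add
      ((hcem.inf continuousOn_const).pow 2)).add
      ((hcim.inf continuousOn_const).pow 2)).add (hsum.mul hsum))
  have hG0 : (fun u => (min (sh u) 0)^2 + (min (eh u) 0)^2 + (min (ih u) 0)^2 + (min (rh u) 0)^2 + (min (am u) 0)^2 + (min (sm u) 0)^2 + (min (em u) 0)^2 + (min (im u) 0)^2 + (sh u + eh u + ih u + rh u - 1)*(sh u + eh u + ih u + rh u - 1)) 0 ≤ (0:ℝ) := by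
    simp only
    rw [min_eq_right hS0, min_eq_right hE0, min_eq_right hI0, min_eq_right hR0,
      min_eq_right hA0.1, min_eq_right hSm0.1, min_eq_right hEm0.1, min_eq_right hIm0.1, h0sum]
    norm_num
  have hslope : ∀ x ∈ Ico (0:ℝ) T, ∀ r, (fun u => 2*min (sh u) 0*(μh - (B*βmh*m*im u + μh)*sh u) + 2*min (eh u) 0*(B*βmh*m*im u*sh u - (νh+μh)*eh u) + 2*min (ih u) 0*(νh*eh u - (ηh+μh)*ih u) + 2*min (rh u) 0*(ηh*ih u - μh*rh u) + 2*min (am u) 0*(φ*(m/k)*(1 - am u)*(sm u + em u + im u) - (ηA+μA)*am u) + 2*min (sm u) 0*(ηA*(k/m)*am u - (B*βhm*ih u + μm)*sm u - c u*sm u) + 2*min (em u) 0*(B*βhm*ih u*sm u - (μm+ηm)*em u - c u*em u) + 2*min (im u) 0*(ηm*em u - μm*im u - c u*im u) + (((μh - (B*βmh*m*im u + μh)*sh u) + (B*βmh*m*im u*sh u - (νh+μh)*eh u) + (νh*eh u - (ηh+μh)*ih u) + (ηh*ih u - μh*rh u)) * (sh u + eh u + ih u + rh u - 1) + (sh u +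 eh u + ih u + rh u - 1) * ((μh - (B*βmh*m*im u + μh)*sh u) + (B*βmh*m*im u*sh u - (νh+μh)*eh u) + (νh*eh u - (ηh+μh)*ih u) + (ηh*ih u - μh*rh u)))) x < r →
      ∃ᶠ z in nhdsWithin x (Ioi x), (z - x)⁻¹ * ((fun u => (min (sh u) 0)^2 + (min (eh u) 0)^2 + (min (ih u) 0)^2 + (min (rh u) 0)^2 + (min (am u) 0)^2 + (min (sm u) 0)^2 + (min (em u) 0)^2 + (min (im u) 0)^2 + (sh u + eh u + ih u + rh u - 1)*(sh u + eh u + ih u + rh u - 1)) z - (fun u => (min (sh u) 0)^2 + (min (eh u) 0)^2 + (min (ih u) 0)^2 + (min (rh u) 0)^2 + (min (am u) 0)^2 + (min (sm u) 0)^2 + (min (em u) 0)^2 + (min (im u) 0)^2 + (sh u + eh u + ih u + rh u - 1)*(sh u + eh u + ih u + rh u - 1)) x) < r := by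
    intro x hx r hr
    have hd := (hGderiv x hx.1).hasDerivWithinAt (s := Ioi x)
    rw [hasDerivWithinAt_iff_tendsto_slope' (notMem_Ioi_self)] at hd
    have hev : ∀ᶠ z in nhdsWithin x (Ioi x), slope (fun u => (min (sh u) 0)^2 + (min (eh u) 0)^2 + (min (ih u) 0)^2 + (min (rh u) 0)^2 + (min (am u) 0)^2 + (min (sm u) 0)^2 + (min (em u) 0)^2 + (min (im u) 0)^2 + (sh u + eh u + ih u + rh u - 1)*(sh u + eh u + ih u + rh u - 1)) x z < r :=
      hd.eventually_lt_const hr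
    refine (hev.mono ?_).frequently
    intro z hz
    rwa [slope_def_field, div_eq_inv_mul] at hz
  have hbound : ∀ x ∈ Ico (0:ℝ) T, (fun u => 2*min (sh u) 0*(μh - (B*βmh*m*im u + μh)*sh u) + 2*min (eh u) 0*(B*βmh*m*im u*sh u - (νh+μh)*eh u) + 2*min (ih u) 0*(νh*eh u - (ηh+μh)*ih u) + 2*min (rh u) 0*(ηh*ih u - μh*rh u) + 2*min (am u) 0*(φ*(m/k)*(1 - am u)*(sm u + em u + im u) - (ηA+μA)*am u) + 2*min (sm u) 0*(ηA*(k/m)*am u - (B*βhm*ih u + μm)*sm u - c u*sm u) + 2*min (em u) 0*(B*βhm*ih u*sm u - (μm+ηm)*em u - c u*em u) + 2*min (im u) 0*(ηm*em u - μm*im u - c u*im u) + (((μh - (B*βmh*m*im u + μh)*sh u) + (B*βmh*m*im u*sh u - (νh+μh)*eh u) + (νh*eh u - (ηh+μh)*ih u) + (ηh*ih u - μh*rh u)) * (sh u + eh u + ih u + rh u - 1) + (sh u + eh u + ih u + rh u - 1) * ((μh - (B*βmh*m*im u + μh)*sh u) + (B*βmh*m*im u*sh u - (νh+μh)*eh u)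 + (νh*eh u - (ηh+μh)*ih u) + (ηh*ih u - μh*rh u)))) x ≤ (4*(B*βmh*m*M) + 2*νh + 2*ηh + 3*((φ*(m/k))*(1+M)) + 2*(ηA*(k/m)) + 4*(B*βhm*M) + 2*ηm) * (fun u => (min (sh u) 0)^2 + (min (eh u) 0)^2 + (min (ih u) 0)^2 + (min (rh u) 0)^2 + (min (am u) 0)^2 + (min (sm u) 0)^2 + (min (em u) 0)^2 + (min (im u) 0)^2 + (sh u + eh u + ih u + rh u - 1)*(sh u + eh u + ih u + rh u - 1)) x + 0 := by
    intro x hx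
    have hbx := hb x ⟨hx.1, hx.2.le⟩
    have hcx := (hc x hx.1).1
    simp only [add_zero]
    exact key_ineq B βmh βhm m k μh νh ηh φ ηA μA μm ηm M (c x)
      hB hβmh hβhm hm hk hμh hνh hηh hφ hηA hμA hμm hηm hM0 hcx
      (sh x) (eh x) (ih x) (rh x) (am x) (sm x) (em x) (im x)
      hbx.1 hbx.2.1 hbx.2.2.1 hbx.2.2.2.1 hbx.2.2.2.2.1 hbx.2.2.2.2.2.1
      hbx.2.2.2.2.2.2.1 hbx.2.2.2.2.2.2.2
  have hmono := le_gronwallBound_of_liminf_deriv_right_le (δ := 0) (ε := 0) (K := (4*(B*βmh*m*M) + 2*νh + 2*ηh + 3*((φ*(m/k))*(1+M)) + 2*(ηA*(k/m)) + 4*(B*βhm*M) + 2*ηm))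
    hcont hslope hG0 hbound
  have hfin := hmono T ⟨hT, le_refl T⟩
  rw [gronwallBound_ε0_δ0] at hfin
  have n1 := sq_nonneg (min (sh T) 0); have n2 := sq_nonneg (min (eh T) 0)
  have n3 := sq_nonneg (min (ih T) 0); have n4 := sq_nonneg (min (rh T) 0)
  have n5 := sq_nonneg (min (am T) 0); have n6 := sq_nonneg (min (sm T) 0)
  have n7 := sq_nonneg (min (em T) 0); have n8 := sq_nonneg (min (im T) 0)
  have n9 := mul_self_nonneg (sh T + eh T + ih T + rh T - 1)
  refine ⟨?_, ?_, ?_, ?_, ?_, ?_, ?_, ?_, ?_⟩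
  · exact min_eq_right_iff.mp (pow_eq_zero_iff two_ne_zero |>.mp (le_antisymm (by linarith) n1))
  · exact min_eq_right_iff.mp (pow_eq_zero_iff two_ne_zero |>.mp (le_antisymm (by linarith) n2))
  · exact min_eq_right_iff.mp (pow_eq_zero_iff two_ne_zero |>.mp (le_antisymm (by linarith) n3))
  · exact min_eq_right_iff.mp (pow_eq_zero_iff two_ne_zero |>.mp (le_antisymm (by linarith) n4))
  · exact min_eq_right_iff.mp (pow_eq_zero_iff two_ne_zero |>.mp (le_antisymm (by linarith) n5))
  · exact min_eq_right_iff.mp (pow_eq_zero_iff two_ne_zero |>.mp (le_antisymm (by linarith) n6))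
  · exact min_eq_right_iff.mp (pow_eq_zero_iff two_ne_zero |>.mp (le_antisymm (by linarith) n7))
  · exact min_eq_right_iff.mp (pow_eq_zero_iff two_ne_zero |>.mp (le_antisymm (by linarith) n8))
  · have h1 := mul_self_eq_zero.mp (le_antisymm (by linarith) n9)
    linarith
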